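/- For every dimension d ≥ 1, every k ≥ 1, every λ > 0, and every ε with 0 < ε < 1, one has a_{k,λ(1−ε)} ≥ a_{k,λ} − ε/(1−ε). -/

import Mathlib

open MeasureTheory ProbabilityTheory Filter

noncomputable instance instDecEqEuclidean (d : ℕ) :
    DecidableEq (EuclideanSpace ℝ (Fin d)) := Classical.decEq _

/-- `maxColorable d k r V` is the maximum number of vertices of the geometric
graph `G_r(V)` (edges between distinct points of `V` at Euclidean distance at
most `r`) that can be properly colored with `k` colors, i.e. the maximum
cardinality of a subset `S ⊆ V` admitting a proper `k`-coloring. -/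
noncomputable def maxColorable (d k : ℕ) (r : ℝ)
    (V : Finset (EuclideanSpace ℝ (Fin d))) : ℕ :=
  sSup {m : ℕ | ∃ S : Finset (EuclideanSpace ℝ (Fin d)), S ⊆ V ∧ S.card = m ∧
    ∃ c : EuclideanSpace ℝ (Fin d) → Fin k,
      ∀ u ∈ S, ∀ v ∈ S, u ≠ v → dist u v ≤ r → c u ≠ c v}

-- auxiliary
def colorSet (d k : ℕ) (r : ℝ) (V : Finset (EuclideanSpace ℝ (Fin d))) : Set ℕ :=
  {m : ℕ | ∃ S : Finset (EuclideanSpace ℝ (Fin d)), S ⊆ V ∧ S.card = m ∧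
    ∃ c : EuclideanSpace ℝ (Fin d) → Fin k,
      ∀ u ∈ S, ∀ v ∈ S, u ≠ v → dist u v ≤ r → c u ≠ c v}

lemma maxColorable_eq (d k : ℕ) (r : ℝ) (V : Finset (EuclideanSpace ℝ (Fin d))) :
    maxColorable d k r V = sSup (colorSet d k r V) := rfl

lemma zero_mem_colorSet (d k : ℕ) (hk : 1 ≤ k) (r : ℝ)
    (V : Finset (EuclideanSpace ℝ (Fin d))) : 0 ∈ colorSet d k r V := by
  refine ⟨∅, Finset.empty_subset _, Finset.card_empty, fun _ => ⟨0, hk⟩, ?_⟩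
  simp

lemma bddAbove_colorSet (d k : ℕ) (r : ℝ) (V : Finset (EuclideanSpace ℝ (Fin d))) :
    BddAbove (colorSet d k r V) := by
  refine ⟨V.card, fun m hm => ?_⟩
  obtain ⟨S, hS, hc, -⟩ := hm
  exact hc ▸ Finset.card_le_card hS

lemma maxColorable_le_card (d k : ℕ) (r : ℝ) (V : Finset (EuclideanSpace ℝ (Fin d))) :
    maxColorable d k r V ≤ V.card := by
  refine csSup_le' fun m hm => ?_
  obtain ⟨S, hS, hc, -⟩ := hm
  exact hc ▸ Finset.card_le_card hS

lemma maxColorable_anti (d k : ℕ) (hk : 1 ≤ k) {r r' : ℝ} (h : r ≤ r')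
    (V : Finset (EuclideanSpace ℝ (Fin d))) :
    maxColorable d k r' V ≤ maxColorable d k r V := by
  refine csSup_le_csSup (bddAbove_colorSet d k r V)
    ⟨0, zero_mem_colorSet d k hk r' V⟩ ?_
  rintro m ⟨S, hS, hcard, c, hc⟩
  exact ⟨S, hS, hcard, c, fun u hu v hv huv hd => hc u hu v hv huv (hd.trans h)⟩

lemma le_maxColorable_iff (d k : ℕ) (hk : 1 ≤ k) (r : ℝ) (n m : ℕ)
    (x : Fin n → EuclideanSpace ℝ (Fin d)) :
    m ≤ maxColorable d k r (Finset.image x Finset.univ) ↔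
      ∃ T : Finset (Fin n), ∃ σ : Fin n → Fin k, T.card = m ∧
        (∀ i ∈ T, ∀ j ∈ T, i ≠ j → x i ≠ x j) ∧
        (∀ i ∈ T, ∀ j ∈ T, i ≠ j → dist (x i) (x j) ≤ r → σ i ≠ σ j) := by
  constructor
  · intro h
    rw [maxColorable_eq] at h
    have hmem := Nat.sSup_mem (s := colorSet d k r (Finset.image x Finset.univ))
      ⟨0, zero_mem_colorSet d k hk r _⟩ (bddAbove_colorSet d k r _)
    obtain ⟨S, hS, hcard, c, hc⟩ := hmem
    have hm : m ≤ S.card := hcard ▸ h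
    obtain ⟨S₀, hS₀, hS₀card⟩ := Finset.exists_subset_card_eq hm
    have hrep : ∀ s : {a // a ∈ S₀}, ∃ i : Fin n, x i = s.1 := by
      intro s
      have := hS (hS₀ s.2)
      simpa [Finset.mem_image] using this
    set g : {a // a ∈ S₀} → Fin n := fun s => (hrep s).choose with hg
    have hgx : ∀ s, x (g s) = s.1 := fun s => (hrep s).choose_spec
    have hginj : Function.Injective g := by
      intro s₁ s₂ he
      have : x (g s₁) = x (g s₂) := by rw [he]
      rw [hgx, hgx] at this
      exact Subtype.ext this
    refine ⟨S₀.attach.image g, fun i => c (x i), ?_, ?_, ?_⟩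
    · rw [Finset.card_image_of_injective _ hginj, Finset.card_attach, hS₀card]
    · intro i hi j hj hij
      obtain ⟨s₁, -, rfl⟩ := Finset.mem_image.mp hi
      obtain ⟨s₂, -, rfl⟩ := Finset.mem_image.mp hj
      simp only [hgx]
      intro hval
      exact hij (congrArg g (Subtype.ext hval))
    · intro i hi j hj hij hdist
      obtain ⟨s₁, -, rfl⟩ := Finset.mem_image.mp hi
      obtain ⟨s₂, -, rfl⟩ := Finset.mem_image.mp hj
      have h1 : x (g s₁) = s₁.1 := hgx s₁
      have h2 : x (g s₂) = s₂.1 := hgx s₂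
      have hne : s₁.1 ≠ s₂.1 := by
        intro hval
        exact hij (congrArg g (Subtype.ext hval))
      have := hc s₁.1 (hS₀ s₁.2) s₂.1 (hS₀ s₂.2) hne (by rwa [h1, h2] at hdist)
      simpa only [h1, h2] using this
  · rintro ⟨T, σ, hTcard, hinj, hprop⟩
    rw [maxColorable_eq]
    refine le_csSup (bddAbove_colorSet d k r _) ?_
    have hinjOn : Set.InjOn x T := by
      intro i hi j hj he
      by_contra hij
      exact hinj i hi j hj hij he
    classical
    refine ⟨T.image x, ?_, ?_, ?_⟩
    · exact Finset.image_subset_image (Finset.subset_univ T)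
    · rw [Finset.card_image_of_injOn hinjOn, hTcard]
    · refine ⟨fun v => if h : ∃ i ∈ T, x i = v then σ h.choose else ⟨0, hk⟩, ?_⟩
      intro u hu v hv huv hdist
      have hu' : ∃ i ∈ T, x i = u := by simpa [Finset.mem_image] using hu
      have hv' : ∃ i ∈ T, x i = v := by simpa [Finset.mem_image] using hv
      simp only [ne_eq, dif_pos hu', dif_pos hv']
      obtain ⟨hiu, hxu⟩ := hu'.choose_spec
      obtain ⟨hiv, hxv⟩ := hv'.choose_spec
      have hne : hu'.choose ≠ hv'.choose := by
        intro he
        rw [← hxu, ← hxv, he] at huv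
        exact huv rfl
      exact hprop _ hiu _ hiv hne (by rw [hxu, hxv]; exact hdist)

lemma measurableSet_le_maxColorable (d k : ℕ) (hk : 1 ≤ k) (r : ℝ) (n m : ℕ) :
    MeasurableSet {x : Fin n → EuclideanSpace ℝ (Fin d) |
      m ≤ maxColorable d k r (Finset.image x Finset.univ)} := by
  have heq : {x : Fin n → EuclideanSpace ℝ (Fin d) |
      m ≤ maxColorable d k r (Finset.image x Finset.univ)} =
      ⋃ (T : Finset (Fin n)), ⋃ (σ : Fin n → Fin k),
        ({x : Fin n → EuclideanSpace ℝ (Fin d) | T.card = m} ∩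
         (⋂ (i : Fin n) (j : Fin n),
           {x : Fin n → EuclideanSpace ℝ (Fin d) |
             i ∈ T → j ∈ T → i ≠ j → x i ≠ x j}) ∩
         (⋂ (i : Fin n) (j : Fin n),
           {x : Fin n → EuclideanSpace ℝ (Fin d) |
             i ∈ T → j ∈ T → i ≠ j → dist (x i) (x j) ≤ r → σ i ≠ σ j})) := by
    ext x
    rw [Set.mem_setOf_eq, le_maxColorable_iff d k hk r n m x]
    simp only [Set.mem_iUnion, Set.mem_inter_iff, Set.mem_iInter, Set.mem_setOf_eq]
    constructor
    · rintro ⟨T, σ, h1, h2, h3⟩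
      exact ⟨T, σ, ⟨h1, fun i j hi hj => h2 i hi j hj⟩, fun i j hi hj => h3 i hi j hj⟩
    · rintro ⟨T, σ, ⟨h1, h2⟩, h3⟩
      exact ⟨T, σ, h1, fun i hi j hj => h2 i j hi hj, fun i hi j hj => h3 i j hi hj⟩
  rw [heq]
  refine MeasurableSet.iUnion fun T => MeasurableSet.iUnion fun σ => ?_
  refine MeasurableSet.inter (MeasurableSet.inter ?_ ?_) ?_
  · by_cases hT : T.card = m <;> simp [hT]
  · refine MeasurableSet.iInter fun i => MeasurableSet.iInter fun j => ?_
    by_cases hi : i ∈ T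
    · by_cases hj : j ∈ T
      · by_cases hij : i = j
        · simp [hij]
        · have : {x : Fin n → EuclideanSpace ℝ (Fin d) |
              i ∈ T → j ∈ T → i ≠ j → x i ≠ x j} =
              {x : Fin n → EuclideanSpace ℝ (Fin d) | x i = x j}ᶜ := by
            ext x; simp [hi, hj, hij]
          rw [this]
          exact (measurableSet_eq_fun (measurable_pi_apply i)
            (measurable_pi_apply j)).compl
      · simp [hj]
    · simp [hi]
  · refine MeasurableSet.iInter fun i => MeasurableSet.iInter fun j => ?_
    by_cases hi : i ∈ T
    · by_cases hj : j ∈ T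
      · by_cases hij : i = j
        · simp [hij]
        · by_cases hσ : σ i = σ j
          · have : {x : Fin n → EuclideanSpace ℝ (Fin d) |
                i ∈ T → j ∈ T → i ≠ j → dist (x i) (x j) ≤ r → σ i ≠ σ j} =
                {x : Fin n → EuclideanSpace ℝ (Fin d) | dist (x i) (x j) ≤ r}ᶜ := by
              ext x; simp [hi, hj, hij, hσ]
            rw [this]
            exact (measurableSet_le ((measurable_pi_apply i).dist
              (measurable_pi_apply j)) measurable_const).compl
          · have : {x : Fin n → EuclideanSpace ℝ (Fin d) |
                i ∈ T → j ∈ T → i ≠ j → dist (x i) (x j) ≤ r → σ i ≠ σ j} =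
                Set.univ := by
              ext x; simp [hσ]
            simp [this]
      · simp [hj]
    · simp [hi]

lemma measurable_maxColorable (d k : ℕ) (hk : 1 ≤ k) (r : ℝ) (n : ℕ) :
    Measurable (fun x : Fin n → EuclideanSpace ℝ (Fin d) =>
      maxColorable d k r (Finset.image x Finset.univ)) := by
  apply measurable_to_countable'
  intro m
  have : (fun x : Fin n → EuclideanSpace ℝ (Fin d) =>
      maxColorable d k r (Finset.image x Finset.univ)) ⁻¹' {m} =
      {x : Fin n → EuclideanSpace ℝ (Fin d) |
        m ≤ maxColorable d k r (Finset.image x Finset.univ)} ∩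
      {x : Fin n → EuclideanSpace ℝ (Fin d) |
        m + 1 ≤ maxColorable d k r (Finset.image x Finset.univ)}ᶜ := by
    ext x
    simp only [Set.mem_preimage, Set.mem_singleton_iff, Set.mem_inter_iff,
      Set.mem_compl_iff, Set.mem_setOf_eq]
    omega
  rw [this]
  exact (measurableSet_le_maxColorable d k hk r n m).inter
    (measurableSet_le_maxColorable d k hk r n (m + 1)).compl

/-- The unit cube `[0,1]^d`. -/
def unitCube (d : ℕ) : Set (EuclideanSpace ℝ (Fin d)) :=
  {x | ∀ i, x i ∈ Set.Icc (0 : ℝ) 1}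

/-- The uniform distribution on the unit cube `[0,1]^d` (Lebesgue measure
restricted to the cube, which has total mass one). -/
noncomputable def uniformCube (d : ℕ) : Measure (EuclideanSpace ℝ (Fin d)) :=
  volume.restrict (unitCube d)

lemma volume_unitCube (d : ℕ) : volume (unitCube d) = 1 := by
  have h1 : unitCube d = (MeasurableEquiv.toLp 2 (Fin d → ℝ)).symm ⁻¹'
      (Set.pi Set.univ fun _ : Fin d => Set.Icc (0 : ℝ) 1) := by
    ext x
    simp only [unitCube, Set.mem_setOf_eq, Set.mem_preimage,
      MeasurableEquiv.coe_toLp_symm, Set.mem_univ_pi, Set.mem_Icc]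
  rw [h1, (EuclideanSpace.volume_preserving_symm_measurableEquiv_toLp (Fin d)).measure_preimage
    ((MeasurableSet.univ_pi fun _ => measurableSet_Icc).nullMeasurableSet)]
  rw [volume_pi_pi]
  simp [Real.volume_Icc]

instance uniformCube_prob (d : ℕ) : IsProbabilityMeasure (uniformCube d) := by
  constructor
  rw [uniformCube, Measure.restrict_apply_univ, volume_unitCube]

/-- `EH d k r n = E[H_{k,r}(n)] = E[N_{k,r}({X_1,…,X_n})]` for `X_1,…,X_n`
i.i.d. uniform on the unit cube `[0,1]^d`. -/
noncomputable def EH (d k : ℕ) (r : ℝ) (n : ℕ) : ℝ :=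
  ∫ x : Fin n → EuclideanSpace ℝ (Fin d),
    (maxColorable d k r (Finset.image x Finset.univ) : ℝ)
    ∂(Measure.pi fun _ => uniformCube d)

lemma maxColorable_le_n (d k : ℕ) (r : ℝ) (n : ℕ) (x : Fin n → EuclideanSpace ℝ (Fin d)) :
    maxColorable d k r (Finset.image x Finset.univ) ≤ n := by
  refine (maxColorable_le_card d k r _).trans ?_
  exact (Finset.card_image_le).trans (by simp)

lemma integrable_maxColorable (d k : ℕ) (hk : 1 ≤ k) (r : ℝ) (n : ℕ) :
    Integrable (fun x : Fin n → EuclideanSpace ℝ (Fin d) =>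
      (maxColorable d k r (Finset.image x Finset.univ) : ℝ))
      (Measure.pi fun _ => uniformCube d) := by
  refine (integrable_const (n : ℝ)).mono' ?_ ?_
  · exact (measurable_from_top.comp (measurable_maxColorable d k hk r n)).aestronglyMeasurable
  · refine Filter.Eventually.of_forall fun x => ?_
    rw [Real.norm_eq_abs, abs_of_nonneg (by positivity)]
    exact_mod_cast maxColorable_le_n d k r n x

lemma EH_nonneg (d k : ℕ) (r : ℝ) (n : ℕ) : 0 ≤ EH d k r n :=
  integral_nonneg fun x => by positivity

lemma EH_le (d k : ℕ) (r : ℝ) (n : ℕ) : EH d k r n ≤ n := by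
  have h := integral_mono_of_nonneg (μ := (Measure.pi fun _ => uniformCube d))
    (f := fun x : Fin n → EuclideanSpace ℝ (Fin d) =>
      (maxColorable d k r (Finset.image x Finset.univ) : ℝ))
    (g := fun _ => (n : ℝ))
    (Filter.Eventually.of_forall fun x => by positivity)
    (integrable_const _)
    (Filter.Eventually.of_forall fun x =>
      Nat.cast_le.mpr (maxColorable_le_n d k r n x))
  simpa [EH] using h

lemma EH_anti (d k : ℕ) (hk : 1 ≤ k) {r r' : ℝ} (h : r ≤ r') (n : ℕ) :
    EH d k r' n ≤ EH d k r n := by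
  refine integral_mono_of_nonneg (Filter.Eventually.of_forall fun x => by positivity)
    (integrable_maxColorable d k hk r n) (Filter.Eventually.of_forall fun x => ?_)
  exact Nat.cast_le.mpr (maxColorable_anti d k hk h _)

/-- `EF d k lam t = E[F_{k,lam}(t)] = ∑_n P(Po(lam t^d) = n) E[H_{k,1/t}(n)]`,
the expected maximum number of `k`-colorable vertices of the unit-distance
geometric graph on a Poisson process of intensity `lam` in `[0,t]^d`. -/
noncomputable def EF (d k : ℕ) (lam t : ℝ) : ℝ :=
  ∑' n : ℕ, poissonPMFReal (Real.toNNReal (lam * t ^ d)) n * EH d k (1 / t) n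

/-- The normalized expectation `\bar F_{k,lam}(t) = E[F_{k,lam}(t)]/(lam t^d)`. -/
noncomputable def Fbar (d k : ℕ) (lam t : ℝ) : ℝ :=
  EF d k lam t / (lam * t ^ d)

/-- The constant `a_{k,lam} = inf_{t>0} \bar F_{k,lam}(t)`. -/
noncomputable def aConst (d k : ℕ) (lam : ℝ) : ℝ :=
  sInf {x : ℝ | ∃ t : ℝ, 0 < t ∧ x = Fbar d k lam t}

/-- The volume `V_d(r) = π^{d/2} r^d / Γ(d/2 + 1)` of the `d`-dimensional
Euclidean ball of radius `r`. -/
noncomputable def ballVol (d : ℕ) (r : ℝ) : ℝ :=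
  Real.pi ^ ((d : ℝ) / 2) * r ^ d / Real.Gamma ((d : ℝ) / 2 + 1)

lemma summable_poisson_mul (μ : NNReal) (g : ℕ → ℝ) (h0 : ∀ n, 0 ≤ g n)
    (hn : ∀ n, g n ≤ n) : Summable fun n => poissonPMFReal μ n * g n := by
  have key : ∀ n : ℕ, poissonPMFReal μ n * g n ≤
      Real.exp (-(μ : ℝ)) * ((2 * (μ : ℝ)) ^ n / n.factorial) := by
    intro n
    have hpn : (0 : ℝ) ≤ poissonPMFReal μ n := poissonPMFReal_nonneg
    have h2 : (n : ℝ) ≤ 2 ^ n := by exact_mod_cast (Nat.lt_two_pow_self (n := n)).le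
    calc poissonPMFReal μ n * g n ≤ poissonPMFReal μ n * n :=
          mul_le_mul_of_nonneg_left (hn n) hpn
      _ ≤ poissonPMFReal μ n * 2 ^ n := mul_le_mul_of_nonneg_left h2 hpn
      _ = Real.exp (-(μ : ℝ)) * ((2 * (μ : ℝ)) ^ n / n.factorial) := by
          rw [poissonPMFReal, mul_pow]; ring
  refine Summable.of_nonneg_of_le
    (fun n => mul_nonneg poissonPMFReal_nonneg (h0 n)) key ?_
  exact (Real.summable_pow_div_factorial (2 * (μ : ℝ))).mul_left _

lemma EF_nonneg (d k : ℕ) (lam t : ℝ) : 0 ≤ EF d k lam t :=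
  tsum_nonneg fun n => mul_nonneg poissonPMFReal_nonneg (EH_nonneg d k (1 / t) n)

lemma bddBelow_FbarSet (d k : ℕ) (lam : ℝ) (hlam : 0 < lam) :
    BddBelow {x : ℝ | ∃ t : ℝ, 0 < t ∧ x = Fbar d k lam t} := by
  refine ⟨0, ?_⟩
  rintro x ⟨t, ht, rfl⟩
  exact div_nonneg (EF_nonneg d k lam t) (by positivity)

/-- `a_{k,λ(1−ε)} ≥ a_{k,λ} − ε/(1−ε)` for `0 < ε < 1`. -/
theorem aConst_ge (d k : ℕ) (hd : 1 ≤ d) (hk : 1 ≤ k) (lam : ℝ) (hlam : 0 < lam)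
    (ε : ℝ) (hε : 0 < ε) (hε1 : ε < 1) :
    aConst d k lam - ε / (1 - ε) ≤ aConst d k (lam * (1 - ε)) := by
  have h1ε : (0 : ℝ) < 1 - ε := by linarith
  refine le_csInf ⟨Fbar d k (lam * (1 - ε)) 1, 1, one_pos, rfl⟩ ?_
  rintro b ⟨t, ht, rfl⟩
  set s : ℝ := t * (1 - ε) ^ ((d : ℝ)⁻¹) with hs_def
  have hs : 0 < s := mul_pos ht (Real.rpow_pos_of_pos h1ε _)
  have hsd : s ^ d = t ^ d * (1 - ε) := by
    rw [hs_def, mul_pow, ← Real.rpow_natCast ((1 - ε) ^ ((d : ℝ)⁻¹)) d,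
      ← Real.rpow_mul h1ε.le, inv_mul_cancel₀ (Nat.cast_ne_zero.mpr (by omega) : (d : ℝ) ≠ 0), Real.rpow_one]
  have hmean : lam * s ^ d = lam * (1 - ε) * t ^ d := by rw [hsd]; ring
  have hst : s ≤ t := by
    have : (1 - ε) ^ ((d : ℝ)⁻¹) ≤ 1 :=
      Real.rpow_le_one h1ε.le (by linarith) (by positivity)
    nlinarith
  have hrs : 1 / t ≤ 1 / s := one_div_le_one_div_of_le hs hst
  have hEF : EF d k lam s ≤ EF d k (lam * (1 - ε)) t := by
    rw [EF, EF, hmean]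
    refine Summable.tsum_le_tsum (fun n => mul_le_mul_of_nonneg_left
        (EH_anti d k hk hrs n) poissonPMFReal_nonneg) ?_ ?_
    · exact summable_poisson_mul _ _ (fun n => EH_nonneg d k (1 / s) n)
        (fun n => EH_le d k (1 / s) n)
    · exact summable_poisson_mul _ _ (fun n => EH_nonneg d k (1 / t) n)
        (fun n => EH_le d k (1 / t) n)
  have hFbar : Fbar d k lam s ≤ Fbar d k (lam * (1 - ε)) t := by
    rw [Fbar, Fbar, ← hmean]
    gcongr
  have h2 : aConst d k lam ≤ Fbar d k lam s :=
    csInf_le (bddBelow_FbarSet d k lam hlam) ⟨s, hs, rfl⟩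
  have h3 : aConst d k lam - ε / (1 - ε) ≤ aConst d k lam :=
    sub_le_self _ (div_nonneg hε.le h1ε.le)
  linarith
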